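/- Let ε ∈ (0,1/3) and let Φ be a k×t real matrix (k ≤ t) of rank k whose singular values σ_1(Φ) ≥ ⋯ ≥ σ_k(Φ) all satisfy |1 − σ_i(Φ)| ≤ ε. Then ‖Φ⁺ − Φᵀ‖₂ ≤ 3ε, where Φ⁺ is the Moore–Penrose pseudoinverse of Φ and ‖·‖₂ is the spectral norm. -/

import Mathlib

open MeasureTheory
open scoped Matrix

/-- Frobenius norm of a real matrix. -/
noncomputable def frobNorm {m n : ℕ} (M : Matrix (Fin m) (Fin n) ℝ) : ℝ :=
  Real.sqrt (∑ i, ∑ j, (M i j) ^ 2)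

/-- Spectral (operator) norm of a real matrix, viewed as a linear map between
Euclidean spaces. -/
noncomputable def specNorm {m n : ℕ} (M : Matrix (Fin m) (Fin n) ℝ) : ℝ :=
  ‖LinearMap.toContinuousLinearMap (Matrix.toEuclideanLin M)‖

/-- `P` is the Moore–Penrose pseudoinverse of `M` (the four Penrose conditions;
such a `P` is unique). -/
def IsMoorePenrose {m n : ℕ} (M : Matrix (Fin m) (Fin n) ℝ)
    (P : Matrix (Fin n) (Fin m) ℝ) : Prop :=
  M * P * M = M ∧ P * M * P = P ∧ (M * P)ᵀ = M * P ∧ (P * M)ᵀ = P * M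

/-- `X` is an `n × k` cluster indicator matrix: each row `i` has a single nonzero
entry, in column `f i`, equal to `1/√(z_{f i})` where `z_j` is the number of rows
assigned to column `j`. -/
def IsIndicator {n k : ℕ} (X : Matrix (Fin n) (Fin k) ℝ) : Prop :=
  ∃ f : Fin n → Fin k, ∀ i j, X i j =
    if f i = j then 1 / Real.sqrt ((Finset.univ.filter fun i' => f i' = j).card) else 0

/-- The singular values of a `k × t` real matrix `M` (in some order): the square
roots of the eigenvalues of `M * Mᵀ`. -/
noncomputable def singVals {k t : ℕ} (M : Matrix (Fin k) (Fin t) ℝ) (i : Fin k) : ℝ :=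
  Real.sqrt ((Matrix.isHermitian_mul_conjTranspose_self M).eigenvalues i)

/-- The `d × t` random sign matrix with entries `±1/√t`, as a function of the
sample point `ω` (a `d × t` array of fair coins). -/
noncomputable def signMatrix (d t : ℕ) (ω : Fin d → Fin t → Bool) :
    Matrix (Fin d) (Fin t) ℝ :=
  Matrix.of fun i j => (if ω i j then (1 : ℝ) else -1) / Real.sqrt t

/-- The law of a `d × t` matrix of i.i.d. fair signs: the uniform probability
measure on all `d × t` sign patterns. -/
noncomputable def signMeasure (d t : ℕ) : Measure (Fin d → Fin t → Bool) :=
  (PMF.uniformOfFintype (Fin d → Fin t → Bool)).toMeasure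

/-- Lemma 3 (pseudoinverse vs transpose, spectral norm bound). -/
theorem statement5 (k t : ℕ) (hkt : k ≤ t) (ε : ℝ) (hε0 : 0 < ε) (hε : ε < 1 / 3)
    (Φ : Matrix (Fin k) (Fin t) ℝ) (hrank : Φ.rank = k)
    (hσ : ∀ i : Fin k, |1 - singVals Φ i| ≤ ε)
    (P : Matrix (Fin t) (Fin k) ℝ) (hP : IsMoorePenrose Φ P) :
    specNorm (P - Φᵀ) ≤ 3 * ε := by
  classical
  have hε1 : ε < 1 := by linarith
  have hB : (Φ * Φᴴ).IsHermitian := Matrix.isHermitian_mul_conjTranspose_self Φ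
  have hΦT : Φᴴ = Φᵀ := Matrix.conjTranspose_eq_transpose_of_trivial Φ
  obtain ⟨B, hBdef⟩ : ∃ M, M = Φ * Φᴴ := ⟨_, rfl⟩
  obtain ⟨μ, hμdef⟩ : ∃ f, f = hB.eigenvalues := ⟨_, rfl⟩
  obtain ⟨U, hUdef⟩ : ∃ M, M = (hB.eigenvectorUnitary : Matrix (Fin k) (Fin k) ℝ) := ⟨_, rfl⟩
  have hUU : U * Uᵀ = 1 := by
    have := Matrix.mem_unitaryGroup_iff.mp hB.eigenvectorUnitary.2
    rw [hUdef]
    simpa [Matrix.star_eq_conjTranspose,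
      Matrix.conjTranspose_eq_transpose_of_trivial] using this
  have hUtU : Uᵀ * U = 1 := mul_eq_one_comm.mp hUU
  have hspec : B = U * Matrix.diagonal μ * Uᵀ := by
    rw [hBdef, hμdef, hUdef]
    have := hB.spectral_theorem
    simpa [Matrix.star_eq_conjTranspose,
      Matrix.conjTranspose_eq_transpose_of_trivial, Function.comp] using this
  -- singular value bounds
  have hsb : ∀ i, 1 - ε ≤ Real.sqrt (μ i) ∧ Real.sqrt (μ i) ≤ 1 + ε := by
    intro i
    have h := abs_le.mp (hσ i)
    have hsv : singVals Φ i = Real.sqrt (μ i) := by rw [hμdef]; rfl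
    rw [hsv] at h
    exact ⟨by linarith [h.2], by linarith [h.1]⟩
  have hμpos : ∀ i, 0 < μ i := by
    intro i
    by_contra h
    push_neg at h
    have h0 : Real.sqrt (μ i) = 0 := Real.sqrt_eq_zero_of_nonpos h
    have h1 := (hsb i).1
    rw [h0] at h1
    linarith
  have hμsq : ∀ i, Real.sqrt (μ i) ^ 2 = μ i := fun i => Real.sq_sqrt (hμpos i).le
  -- conjugation helper
  have key : ∀ D D' : Matrix (Fin k) (Fin k) ℝ,
      (U * D * Uᵀ) * (U * D' * Uᵀ) = U * (D * D') * Uᵀ := by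
    intro D D'
    calc (U * D * Uᵀ) * (U * D' * Uᵀ) = U * (D * ((Uᵀ * U) * (D' * Uᵀ))) := by
          simp only [Matrix.mul_assoc]
      _ = U * (D * D') * Uᵀ := by
          rw [hUtU, Matrix.one_mul]; simp only [Matrix.mul_assoc]
  -- inverse of B
  obtain ⟨Binv, hBinvdef⟩ :
      ∃ M, M = U * Matrix.diagonal (fun i => (μ i)⁻¹) * Uᵀ := ⟨_, rfl⟩
  have hBBinv : B * Binv = 1 := by
    rw [hspec, hBinvdef, key, Matrix.diagonal_mul_diagonal]
    have : (fun i => μ i * (μ i)⁻¹) = fun _ : Fin k => (1 : ℝ) :=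
      funext fun i => mul_inv_cancel₀ (hμpos i).ne'
    rw [this, Matrix.diagonal_one, Matrix.mul_one, hUU]
  -- Φ * P = 1
  have hΦP : Φ * P = 1 := by
    have h1 : (Φ * P) * B = B := by
      rw [hBdef, ← Matrix.mul_assoc, hP.1]
    calc Φ * P = (Φ * P) * (B * Binv) := by rw [hBBinv, Matrix.mul_one]
      _ = ((Φ * P) * B) * Binv := by simp only [Matrix.mul_assoc]
      _ = B * Binv := by rw [h1]
      _ = 1 := hBBinv
  -- P * B = Φᵀ
  have hPB : P * B = Φᵀ := by
    have hPΦ : (P * Φ)ᵀ = P * Φ := hP.2.2.2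
    calc P * B = (P * Φ) * Φᴴ := by rw [hBdef, Matrix.mul_assoc]
      _ = (P * Φ)ᵀ * Φᵀ := by rw [hPΦ, hΦT]
      _ = (Φ * (P * Φ))ᵀ := by simp [Matrix.transpose_mul]
      _ = Φᵀ := by rw [← Matrix.mul_assoc, hP.1]
  have hPeq : P = Φᵀ * Binv := by
    calc P = P * (B * Binv) := by rw [hBBinv, Matrix.mul_one]
      _ = (P * B) * Binv := by simp only [Matrix.mul_assoc]
      _ = Φᵀ * Binv := by rw [hPB]
  -- the difference
  obtain ⟨c, hcdef⟩ : ∃ f : Fin k → ℝ, f = fun i => (μ i)⁻¹ - 1 := ⟨_, rfl⟩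
  have hC : Binv - 1 = U * Matrix.diagonal c * Uᵀ := by
    have hdc : Matrix.diagonal c = Matrix.diagonal (fun i => (μ i)⁻¹) - 1 := by
      rw [hcdef]
      ext i j
      by_cases h : i = j <;> simp [Matrix.diagonal_apply, Matrix.one_apply, h]
    rw [hBinvdef, hdc, Matrix.mul_sub, Matrix.sub_mul, Matrix.mul_one, hUU]
  have hA : P - Φᵀ = Φᵀ * (Binv - 1) := by
    rw [hPeq, Matrix.mul_sub, Matrix.mul_one]
  obtain ⟨g, hgdef⟩ : ∃ f : Fin k → ℝ, f = fun i => c i * μ i * c i := ⟨_, rfl⟩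
  have hD : (P - Φᵀ)ᵀ * (P - Φᵀ) = U * Matrix.diagonal g * Uᵀ := by
    rw [hA, Matrix.transpose_mul, Matrix.transpose_transpose, hC]
    have hCT : (U * Matrix.diagonal c * Uᵀ)ᵀ = U * Matrix.diagonal c * Uᵀ := by
      rw [Matrix.transpose_mul, Matrix.transpose_mul, Matrix.transpose_transpose,
        Matrix.diagonal_transpose, Matrix.mul_assoc]
    rw [hCT]
    calc (U * Matrix.diagonal c * Uᵀ) * Φ * (Φᵀ * (U * Matrix.diagonal c * Uᵀ))
        = (U * Matrix.diagonal c * Uᵀ) * (Φ * Φᵀ) * (U * Matrix.diagonal c * Uᵀ) := by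
          simp only [Matrix.mul_assoc]
      _ = (U * Matrix.diagonal c * Uᵀ) * B * (U * Matrix.diagonal c * Uᵀ) := by
          rw [hBdef, hΦT]
      _ = ((U * Matrix.diagonal c * Uᵀ) * (U * Matrix.diagonal μ * Uᵀ))
            * (U * Matrix.diagonal c * Uᵀ) := by rw [hspec]
      _ = U * Matrix.diagonal g * Uᵀ := by
          rw [key, key, Matrix.diagonal_mul_diagonal, Matrix.diagonal_mul_diagonal, hgdef]
  -- quadratic form identity
  have quad : ∀ {a b : ℕ} (M : Matrix (Fin a) (Fin b) ℝ) (v : Fin b → ℝ),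
      (M *ᵥ v) ⬝ᵥ (M *ᵥ v) = v ⬝ᵥ ((Mᵀ * M) *ᵥ v) := by
    intro a b M v
    rw [← Matrix.mulVec_mulVec, Matrix.dotProduct_mulVec v Mᵀ (M *ᵥ v),
      Matrix.vecMul_transpose]
  -- bound on g
  have hg_eq : ∀ i, g i = (1 - μ i) ^ 2 / μ i := by
    intro i
    rw [hgdef, hcdef]
    field_simp [(hμpos i).ne']
  have hgle : ∀ i, g i ≤ 9 * ε ^ 2 := by
    intro i
    have hμi := hμpos i
    have hs1 := (hsb i).1
    have hs2 := (hsb i).2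
    have hmu : μ i = Real.sqrt (μ i) ^ 2 := (hμsq i).symm
    rw [hg_eq i, div_le_iff₀ hμi, hmu]
    have h1 : (1 - Real.sqrt (μ i)) ^ 2 ≤ ε ^ 2 := by nlinarith
    have h2 : (1 + Real.sqrt (μ i)) ^ 2 ≤ 9 * Real.sqrt (μ i) ^ 2 := by nlinarith
    have h3 := mul_le_mul h1 h2 (sq_nonneg _) (sq_nonneg ε)
    calc (1 - Real.sqrt (μ i) ^ 2) ^ 2
        = (1 - Real.sqrt (μ i)) ^ 2 * (1 + Real.sqrt (μ i)) ^ 2 := by ring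
      _ ≤ ε ^ 2 * (9 * Real.sqrt (μ i) ^ 2) := h3
      _ = 9 * ε ^ 2 * Real.sqrt (μ i) ^ 2 := by ring
  have hgnn : ∀ i, 0 ≤ g i := by
    intro i
    rw [hg_eq i]
    exact div_nonneg (sq_nonneg _) (hμpos i).le
  -- the norm bound
  show ‖LinearMap.toContinuousLinearMap (Matrix.toEuclideanLin (P - Φᵀ))‖ ≤ 3 * ε
  apply ContinuousLinearMap.opNorm_le_bound _ (by positivity)
  intro x
  set v : Fin k → ℝ := (WithLp.equiv 2 (Fin k → ℝ)) x with hv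
  have happ : LinearMap.toContinuousLinearMap (Matrix.toEuclideanLin (P - Φᵀ)) x
      = (WithLp.equiv 2 (Fin t → ℝ)).symm ((P - Φᵀ) *ᵥ v) := by
    simp [Matrix.toEuclideanLin_apply, hv, Matrix.sub_mulVec, WithLp.toLp_sub]
  rw [happ]
  have hnormL : ‖(WithLp.equiv 2 (Fin t → ℝ)).symm ((P - Φᵀ) *ᵥ v)‖
      = Real.sqrt (∑ i, ((P - Φᵀ) *ᵥ v) i ^ 2) := by
    rw [EuclideanSpace.norm_eq]
    congr 1
    apply Finset.sum_congr rfl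
    intro i _
    simp [Real.norm_eq_abs, sq_abs]
  have hnormx : ‖x‖ = Real.sqrt (∑ j, v j ^ 2) := by
    rw [EuclideanSpace.norm_eq]
    congr 1
    apply Finset.sum_congr rfl
    intro j _
    simp [Real.norm_eq_abs, sq_abs, hv]
  have e4 : ∑ i, (Uᵀ *ᵥ v) i ^ 2 = ∑ j, v j ^ 2 := by
    have h := quad Uᵀ v
    rw [Matrix.transpose_transpose, hUU, Matrix.one_mulVec] at h
    calc ∑ i, (Uᵀ *ᵥ v) i ^ 2 = (Uᵀ *ᵥ v) ⬝ᵥ (Uᵀ *ᵥ v) := by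
          simp [dotProduct, pow_two]
      _ = v ⬝ᵥ v := h
      _ = ∑ j, v j ^ 2 := by simp [dotProduct, pow_two]
  have hsum : ∑ i, ((P - Φᵀ) *ᵥ v) i ^ 2 ≤ 9 * ε ^ 2 * ∑ j, v j ^ 2 := by
    have e1 : ∑ i, ((P - Φᵀ) *ᵥ v) i ^ 2 = ((P - Φᵀ) *ᵥ v) ⬝ᵥ ((P - Φᵀ) *ᵥ v) := by
      simp [dotProduct, pow_two]
    have e3 : v ⬝ᵥ ((U * Matrix.diagonal g * Uᵀ) *ᵥ v)
        = ∑ i, g i * (Uᵀ *ᵥ v) i ^ 2 := by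
      rw [← Matrix.mulVec_mulVec, ← Matrix.mulVec_mulVec, Matrix.dotProduct_mulVec,
        ← Matrix.mulVec_transpose]
      simp only [dotProduct]
      apply Finset.sum_congr rfl
      intro i _
      rw [Matrix.mulVec_diagonal]
      ring
    rw [e1, quad (P - Φᵀ) v, hD, e3]
    calc ∑ i, g i * (Uᵀ *ᵥ v) i ^ 2 ≤ ∑ i, 9 * ε ^ 2 * (Uᵀ *ᵥ v) i ^ 2 :=
        Finset.sum_le_sum fun i _ => mul_le_mul_of_nonneg_right (hgle i) (sq_nonneg _)
      _ = 9 * ε ^ 2 * ∑ i, (Uᵀ *ᵥ v) i ^ 2 := by rw [Finset.mul_sum]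
      _ = 9 * ε ^ 2 * ∑ j, v j ^ 2 := by rw [e4]
  rw [hnormL, hnormx]
  calc Real.sqrt (∑ i, ((P - Φᵀ) *ᵥ v) i ^ 2)
      ≤ Real.sqrt (9 * ε ^ 2 * ∑ j, v j ^ 2) := Real.sqrt_le_sqrt hsum
    _ = 3 * ε * Real.sqrt (∑ j, v j ^ 2) := by
        rw [Real.sqrt_mul (by positivity), show (9:ℝ) * ε ^ 2 = (3*ε)^2 by ring,
          Real.sqrt_sq (by positivity)]
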